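/- Let d ≥ 2 and m ≥ 1 be integers with (d−1) dividing (m+1), and set a = (m+1)/(d−1). Let p be a prime dividing d and t = ν_p(d). Let n ≥ 1 be an integer with m ≤ d^{n+1} − 3. If m = d − 2 or p does not divide m, then B(d,m,n) ≠ 0 and ν_p(B(d,m,n)) = −(ν_p(a!) + t·a). -/

import Mathlib

/-- Generalized binomial coefficient `C_j(x) = x(x-1)⋯(x-j+1)/j!`, with `C_0(x) = 1`. -/
noncomputable def genBinom (x : ℚ) (j : ℕ) : ℚ :=
  (∏ i ∈ Finset.range j, (x - (i : ℚ))) / (Nat.factorial j : ℚ)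

/-- The Ewing–Schober combinatorial formula `B(d,m,n)`: the sum is over all tuples
`(j_1,…,j_n)` of nonnegative integers (here `j : Fin n → ℕ`, 0-indexed, so `j k`
corresponds to `j_{k+1}`) satisfying `Σ_{k=1}^n (d^{n-k+1} - 1) j_k = m + 1`, of
`Π_{k=1}^n C_{j_k}(m/d^{n-k+1} - Σ_{l=1}^{k-1} d^{k-l} j_l)`, multiplied by `-(1/m)`. -/
noncomputable def multibrotB (d m n : ℕ) : ℚ :=
  -(1 / (m : ℚ)) * ∑ᶠ j : Fin n → ℕ,
    if (∑ k : Fin n, (d ^ (n - k.val) - 1) * j k) = m + 1 then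
      ∏ k : Fin n,
        genBinom ((m : ℚ) / (d : ℚ) ^ (n - k.val)
          - ∑ l ∈ Finset.univ.filter (fun l : Fin n => l < k),
              (d : ℚ) ^ (k.val - l.val) * ((j l : ℕ) : ℚ)) (j k)
    else 0


open Finset


section Helpers
variable {p : ℕ} [hp : Fact p.Prime]

lemma padic_prod {ι : Type*} (s : Finset ι) (f : ι → ℚ) (h : ∀ i ∈ s, f i ≠ 0) :
    (∏ i ∈ s, f i) ≠ 0 ∧ padicValRat p (∏ i ∈ s, f i) = ∑ i ∈ s, padicValRat p (f i) := by
  classical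
  induction s using Finset.cons_induction with
  | empty => simp
  | cons i s hi ih =>
    rw [Finset.prod_cons, Finset.sum_cons]
    have h1 : f i ≠ 0 := h i (Finset.mem_cons_self i s)
    obtain ⟨h2, h3⟩ := ih (fun j hj => h j (Finset.mem_cons_of_mem hj))
    exact ⟨mul_ne_zero h1 h2, by rw [padicValRat.mul h1 h2, h3]⟩

lemma padic_sum_lt {ι : Type*} (s : Finset ι) (f : ι → ℚ) (v : ℤ)
    (h : ∀ i ∈ s, f i = 0 ∨ v < padicValRat p (f i)) :
    (∑ i ∈ s, f i) = 0 ∨ v < padicValRat p (∑ i ∈ s, f i) := by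
  classical
  induction s using Finset.cons_induction with
  | empty => simp
  | cons i s hi ih =>
    rw [Finset.sum_cons]
    have h1 := h i (Finset.mem_cons_self i s)
    have h2 := ih (fun j hj => h j (Finset.mem_cons_of_mem hj))
    rcases h1 with h1 | h1
    · rw [h1, zero_add]; exact h2
    rcases h2 with h2 | h2
    · rw [h2, add_zero]; exact Or.inr h1
    by_cases h0 : f i + ∑ j ∈ s, f j = 0
    · exact Or.inl h0
    · exact Or.inr (lt_of_lt_of_le (lt_min h1 h2) (padicValRat.min_le_padicValRat_add h0))

lemma padic_add_eq {q r : ℚ} {v : ℤ} (hq : q ≠ 0) (hv : padicValRat p q = v)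
    (hr : r = 0 ∨ v < padicValRat p r) :
    q + r ≠ 0 ∧ padicValRat p (q + r) = v := by
  by_cases hr0 : r = 0
  · simpa [hr0] using ⟨hq, hv⟩
  have hrlt : v < padicValRat p r := hr.resolve_left hr0
  have hne : q + r ≠ 0 := by
    intro h0
    have : r = -q := by linarith [h0]
    rw [this, padicValRat.neg, hv] at hrlt
    exact lt_irrefl _ hrlt
  exact ⟨hne, by rw [padicValRat.add_eq_of_lt hne hq hr0 (hv ▸ hrlt), hv]⟩

lemma padic_genBinom (x : ℚ) (j : ℕ) (c : ℤ)
    (h : ∀ i : ℕ, i < j → (x - i ≠ 0 ∧ padicValRat p (x - i) = c)) :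
    genBinom x j ≠ 0 ∧
      padicValRat p (genBinom x j) = j * c - padicValNat p (Nat.factorial j) := by
  have hfac : ((Nat.factorial j : ℚ)) ≠ 0 := Nat.cast_ne_zero.2 (Nat.factorial_ne_zero j)
  obtain ⟨h1, h2⟩ := padic_prod (p := p) (Finset.range j) (fun i => x - i)
    (fun i hi => (h i (Finset.mem_range.1 hi)).1)
  refine ⟨div_ne_zero h1 hfac, ?_⟩
  rw [genBinom, padicValRat.div h1 hfac, h2, padicValRat.of_nat]
  congr 1
  rw [Finset.sum_congr rfl (fun i hi => (h i (Finset.mem_range.1 hi)).2)]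
  simp [mul_comm]

lemma padic_int_div_pow (d t : ℕ) (hd : 0 < d)
    (ht : t = padicValNat p d) (z : ℤ) (hz : ¬ (p : ℤ) ∣ z) (e : ℕ) :
    ((z : ℚ) / (d : ℚ) ^ e ≠ 0) ∧ padicValRat p ((z : ℚ) / (d : ℚ) ^ e) = -((e : ℤ) * t) := by
  have hz0 : z ≠ 0 := by rintro rfl; exact hz (dvd_zero _)
  have hzq : (z : ℚ) ≠ 0 := Int.cast_ne_zero.2 hz0
  have hdq : (d : ℚ) ≠ 0 := Nat.cast_ne_zero.2 hd.ne'
  have hde : (d : ℚ) ^ e ≠ 0 := pow_ne_zero _ hdq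
  refine ⟨div_ne_zero hzq hde, ?_⟩
  rw [padicValRat.div hzq hde, padicValRat.pow (d : ℚ)]
  have h1 : padicValRat p (z : ℚ) = 0 := by
    simp [padicValRat.of_int, padicValInt.eq_zero_of_not_dvd hz]
  have h2 : padicValRat p (d : ℚ) = t := by rw [padicValRat.of_nat, ht]
  rw [h1, h2]; ring

lemma padic_prod_nat {ι : Type*} (s : Finset ι) (f : ι → ℕ) (h : ∀ i ∈ s, f i ≠ 0) :
    padicValNat p (∏ i ∈ s, f i) = ∑ i ∈ s, padicValNat p (f i) := by
  classical
  induction s using Finset.cons_induction with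
  | empty => simp
  | cons i s hi ih =>
    rw [Finset.prod_cons, Finset.sum_cons,
      padicValNat.mul (h i (Finset.mem_cons_self i s)) (Finset.prod_ne_zero_iff.2
        (fun j hj => h j (Finset.mem_cons_of_mem hj))),
      ih (fun j hj => h j (Finset.mem_cons_of_mem hj))]

lemma padic_fact_sum_le {ι : Type*} (s : Finset ι) (f : ι → ℕ) (a : ℕ)
    (h : ∑ i ∈ s, f i ≤ a) :
    ∑ i ∈ s, padicValNat p (Nat.factorial (f i)) ≤ padicValNat p (Nat.factorial a) := by
  classical
  have h1 : (∏ i ∈ s, Nat.factorial (f i)) ∣ Nat.factorial a :=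
    (Nat.prod_factorial_dvd_factorial_sum s f).trans (Nat.factorial_dvd_factorial h)
  rw [← padic_prod_nat s (fun i => Nat.factorial (f i)) (fun i _ => Nat.factorial_ne_zero _)]
  exact (padicValNat_dvd_iff_le (Nat.factorial_ne_zero a)).1 (pow_padicValNat_dvd.trans h1)

lemma geom_nat (d : ℕ) (hd : 1 ≤ d) (e : ℕ) :
    (d - 1) * (∑ i ∈ Finset.range e, d ^ i) = d ^ e - 1 := by
  have h1 : 1 ≤ d ^ e := Nat.one_le_pow _ _ hd
  zify [hd, h1]
  exact mul_geom_sum _ _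

end Helpers

noncomputable def mX (d m n : ℕ) (j : Fin n → ℕ) (k : Fin n) : ℚ :=
  (m : ℚ) / (d : ℚ) ^ (n - k.val)
    - ∑ l ∈ Finset.univ.filter (fun l : Fin n => l < k),
        (d : ℚ) ^ (k.val - l.val) * ((j l : ℕ) : ℚ)

noncomputable def mT (d m n : ℕ) (j : Fin n → ℕ) : ℚ :=
  ∏ k : Fin n, genBinom (mX d m n j k) (j k)

noncomputable def mF (d m n : ℕ) (j : Fin n → ℕ) : ℚ :=
  if (∑ k : Fin n, (d ^ (n - k.val) - 1) * j k) = m + 1 then mT d m n j else 0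

lemma multibrotB_eq (d m n : ℕ) :
    multibrotB d m n = -(1 / (m : ℚ)) * ∑ᶠ j : Fin n → ℕ, mF d m n j := rfl

section Mid
variable {p : ℕ} [hp : Fact p.Prime]

lemma mX_sub (d m n t : ℕ) (hd : 2 ≤ d) (hpd : p ∣ d) (hpm : ¬ p ∣ m)
    (ht : t = padicValNat p d) (j : Fin n → ℕ) (k : Fin n) (i : ℕ) :
    mX d m n j k - i ≠ 0 ∧
      padicValRat p (mX d m n j k - i) = -(((n - k.val : ℕ) : ℤ) * t) := by
  set e : ℕ := n - k.val with he
  have he1 : 1 ≤ e := by have := k.isLt; omega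
  set S : ℕ := ∑ l ∈ Finset.univ.filter (fun l : Fin n => l < k), d ^ (k.val - l.val) * j l
    with hS
  have hdq : (d : ℚ) ≠ 0 := by positivity
  have hde : (d : ℚ) ^ e ≠ 0 := pow_ne_zero _ hdq
  have hxe : mX d m n j k - i = (((m : ℤ) - d ^ e * (S + i) : ℤ) : ℚ) / (d : ℚ) ^ e := by
    rw [mX, hS]
    push_cast
    field_simp
    ring
  have hz : ¬ (p : ℤ) ∣ ((m : ℤ) - d ^ e * (S + i)) := by
    intro hdvd
    have h1 : (p : ℤ) ∣ (d : ℤ) ^ e * (S + i) :=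
      Dvd.dvd.mul_right (dvd_pow (Int.natCast_dvd_natCast.2 hpd) (by omega)) _
    have h2 : (p : ℤ) ∣ (m : ℤ) := by
      have := dvd_add hdvd h1
      simpa using this
    exact hpm (Int.natCast_dvd_natCast.1 h2)
  rw [hxe]
  exact padic_int_div_pow d t (by omega) ht _ hz e

lemma mT_val (d m n t : ℕ) (hd : 2 ≤ d) (hpd : p ∣ d) (hpm : ¬ p ∣ m)
    (ht : t = padicValNat p d) (j : Fin n → ℕ) :
    mT d m n j ≠ 0 ∧
      padicValRat p (mT d m n j)
        = -((t : ℤ) * ((∑ k : Fin n, (n - k.val) * j k : ℕ) : ℤ))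
          - ((∑ k : Fin n, padicValNat p (Nat.factorial (j k)) : ℕ) : ℤ) := by
  have hterm : ∀ k : Fin n,
      genBinom (mX d m n j k) (j k) ≠ 0 ∧
        padicValRat p (genBinom (mX d m n j k) (j k))
          = (j k : ℤ) * (-(((n - k.val : ℕ) : ℤ) * t)) - padicValNat p (Nat.factorial (j k)) :=
    fun k => padic_genBinom (mX d m n j k) (j k) _
      (fun i _ => mX_sub d m n t hd hpd hpm ht j k i)
  obtain ⟨h1, h2⟩ := padic_prod (p := p) Finset.univ (fun k => genBinom (mX d m n j k) (j k))
    (fun k _ => (hterm k).1)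
  refine ⟨h1, ?_⟩
  rw [mT] at *
  rw [h2, Finset.sum_congr rfl (fun k _ => (hterm k).2)]
  push_cast
  rw [Finset.sum_sub_distrib]
  congr 1
  rw [Finset.mul_sum, ← Finset.sum_neg_distrib]
  exact Finset.sum_congr rfl fun k _ => by ring
end Mid

lemma nat_le_geom (d e : ℕ) (hd : 2 ≤ d) : e ≤ ∑ i ∈ Finset.range e, d ^ i := by
  calc e = ∑ _i ∈ Finset.range e, 1 := by simp
    _ ≤ ∑ i ∈ Finset.range e, d ^ i :=
      Finset.sum_le_sum (fun i _ => Nat.one_le_pow _ _ (by omega))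

lemma nat_lt_geom (d e : ℕ) (hd : 2 ≤ d) (he : 2 ≤ e) : e < ∑ i ∈ Finset.range e, d ^ i := by
  calc e = ∑ _i ∈ Finset.range e, 1 := by simp
    _ < ∑ i ∈ Finset.range e, d ^ i := by
      refine Finset.sum_lt_sum (fun i _ => Nat.one_le_pow _ _ (by omega)) ⟨1, ?_, ?_⟩
      · exact Finset.mem_range.2 (by omega)
      · simpa using (show 1 < d by omega)

lemma cond_decomp (d m n a : ℕ) (hd : 2 ≤ d) (haa : (d - 1) * a = m + 1)
    (j : Fin n → ℕ) (hcond : ∑ k : Fin n, (d ^ (n - k.val) - 1) * j k = m + 1) :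
    (∑ k : Fin n, (∑ i ∈ Finset.range (n - k.val), d ^ i) * j k) = a := by
  have key : ∀ k : Fin n, (d ^ (n - k.val) - 1) * j k
      = (d - 1) * ((∑ i ∈ Finset.range (n - k.val), d ^ i) * j k) := fun k => by
    rw [← mul_assoc, geom_nat d (by omega)]
  rw [Finset.sum_congr rfl (fun k _ => key k), ← Finset.mul_sum] at hcond
  exact Nat.eq_of_mul_eq_mul_left (by omega) (hcond.trans haa.symm)

lemma cond_extract (d m n a : ℕ) (hd : 2 ≤ d) (haa : (d - 1) * a = m + 1)
    (last : Fin n) (hlast : last.val = n - 1)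
    (j : Fin n → ℕ) (hcond : ∑ k : Fin n, (d ^ (n - k.val) - 1) * j k = m + 1)
    (hne : j ≠ fun k : Fin n => if k = last then a else 0) :
    ∃ k0 : Fin n, k0.val + 2 ≤ n ∧ 1 ≤ j k0 := by
  by_contra hcon
  push_neg at hcon
  apply hne
  have hzero : ∀ k : Fin n, k ≠ last → j k = 0 := by
    intro k hk
    have h1 : k.val ≠ n - 1 := fun h => hk (Fin.ext (h.trans hlast.symm))
    have h2 := k.isLt
    have := hcon k (by omega)
    omega
  have hsum : ∑ k : Fin n, (d ^ (n - k.val) - 1) * j k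
      = (d ^ (n - last.val) - 1) * j last := by
    refine Finset.sum_eq_single _ (fun b _ hb => by rw [hzero b hb, mul_zero])
      (fun h => absurd (Finset.mem_univ _) h)
  rw [hsum] at hcond
  have hl : n - last.val = 1 := by have := last.isLt; omega
  rw [hl, pow_one] at hcond
  have hj : j last = a :=
    Nat.eq_of_mul_eq_mul_left (by omega) (hcond.trans haa.symm)
  funext k
  by_cases hk : k = last
  · rw [hk, if_pos rfl, hj]
  · rw [if_neg hk, hzero k hk]

lemma cond_bounds (d m n a : ℕ) (hd : 2 ≤ d) (haa : (d - 1) * a = m + 1)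
    (j : Fin n → ℕ) (hcond : ∑ k : Fin n, (d ^ (n - k.val) - 1) * j k = m + 1)
    (k0 : Fin n) (hk0 : k0.val + 2 ≤ n) (hjk0 : 1 ≤ j k0) :
    (∑ k : Fin n, (n - k.val) * j k) + 1 ≤ a ∧ (∑ k : Fin n, j k) ≤ a := by
  have hc := cond_decomp d m n a hd haa j hcond
  constructor
  · have hlt : (∑ k : Fin n, (n - k.val) * j k)
        < ∑ k : Fin n, (∑ i ∈ Finset.range (n - k.val), d ^ i) * j k := by
      refine Finset.sum_lt_sum
        (fun k _ => Nat.mul_le_mul_right _ (nat_le_geom d _ hd)) ⟨k0, Finset.mem_univ _, ?_⟩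
      exact mul_lt_mul_of_pos_right (nat_lt_geom d _ hd (by omega)) (by omega)
    omega
  · have hle : (∑ k : Fin n, j k)
        ≤ ∑ k : Fin n, (∑ i ∈ Finset.range (n - k.val), d ^ i) * j k := by
      refine Finset.sum_le_sum (fun k _ => ?_)
      have h1 : 1 ≤ ∑ i ∈ Finset.range (n - k.val), d ^ i := by
        have h2 := k.isLt
        have := nat_le_geom d (n - k.val) hd
        omega
      calc j k = 1 * j k := (one_mul _).symm
        _ ≤ _ := Nat.mul_le_mul_right _ h1
    omega


theorem multibrotB_padicValRat_eq (d m n : ℕ) (hd : 2 ≤ d) (hm : 1 ≤ m) (hn : 1 ≤ n)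
    (hdvd : (d - 1) ∣ (m + 1)) (a : ℕ) (ha : a = (m + 1) / (d - 1))
    (p : ℕ) (hp : p.Prime) (hpd : p ∣ d) (t : ℕ) (ht : t = padicValNat p d)
    (hmn : m ≤ d ^ (n + 1) - 3)
    (hcase : m = d - 2 ∨ ¬ p ∣ m) :
    multibrotB d m n ≠ 0 ∧
      padicValRat p (multibrotB d m n)
        = -((padicValNat p (Nat.factorial a) : ℤ) + (t : ℤ) * (a : ℤ)) := by
  haveI : Fact p.Prime := ⟨hp⟩
  classical
  have haa : (d - 1) * a = m + 1 := by rw [ha]; exact Nat.mul_div_cancel' hdvd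
  have ha1 : 1 ≤ a := by
    rcases Nat.eq_zero_or_pos a with h | h
    · rw [h, mul_zero] at haa; omega
    · exact h
  have ham : a ≤ m + 1 := le_trans (Nat.le_mul_of_pos_left a (by omega)) haa.le
  have hdp : 0 < d := by omega
  have ht1 : 1 ≤ t := by rw [ht]; exact one_le_padicValNat_of_dvd hdp.ne' hpd
  have hlastlt : n - 1 < n := by omega
  set last : Fin n := ⟨n - 1, hlastlt⟩ with hlastdef
  have hlast : last.val = n - 1 := rfl
  set j0 : Fin n → ℕ := fun k => if k = last then a else 0 with hj0def
  set S : Finset (Fin n → ℕ) := Fintype.piFinset (fun _ => Finset.range (m + 2)) with hSdef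
  have hsupp : Function.support (mF d m n) ⊆ ↑S := by
    intro j hj
    have hcond : (∑ k : Fin n, (d ^ (n - k.val) - 1) * j k) = m + 1 := by
      by_contra h
      exact hj (by rw [mF, if_neg h])
    simp only [hSdef, Finset.mem_coe, Fintype.mem_piFinset, Finset.mem_range]
    intro k
    have h1 : (d ^ (n - k.val) - 1) * j k ≤ m + 1 := by
      rw [← hcond]
      exact Finset.single_le_sum (f := fun k : Fin n => (d ^ (n - k.val) - 1) * j k)
        (fun i _ => Nat.zero_le _) (Finset.mem_univ k)
    have h2 : d ≤ d ^ (n - k.val) := Nat.le_self_pow (by have := k.isLt; omega) d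
    have h3 : j k ≤ (d ^ (n - k.val) - 1) * j k := Nat.le_mul_of_pos_left _ (by omega)
    omega
  have hsum0 : multibrotB d m n = -(1 / (m : ℚ)) * ∑ j ∈ S, mF d m n j := by
    rw [multibrotB_eq, finsum_eq_sum_of_support_subset _ hsupp]
  have hj0S : j0 ∈ S := by
    simp only [hSdef, Fintype.mem_piFinset, Finset.mem_range]
    intro k
    by_cases hk : k = last <;> simp only [hj0def, hk, if_pos, if_neg, ite_true, ite_false] <;> omega
  have hl1 : n - last.val = 1 := by rw [hlast]; omega
  have hcondj0 : (∑ k : Fin n, (d ^ (n - k.val) - 1) * j0 k) = m + 1 := by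
    have hs : ∑ k : Fin n, (d ^ (n - k.val) - 1) * j0 k
        = (d ^ (n - last.val) - 1) * j0 last := by
      refine Finset.sum_eq_single _ (fun b _ hb => ?_) (fun h => absurd (Finset.mem_univ _) h)
      simp [hj0def, hb]
    rw [hs, hl1, pow_one]
    simp only [hj0def, if_pos rfl]
    exact haa
  have hdecomp : ∑ j ∈ S, mF d m n j = mF d m n j0 + ∑ j ∈ S.erase j0, mF d m n j :=
    (Finset.add_sum_erase S (mF d m n) hj0S).symm
  have hmq : (m : ℚ) ≠ 0 := Nat.cast_ne_zero.2 (by omega)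
  have hdq : (d : ℚ) ≠ 0 := Nat.cast_ne_zero.2 (by omega)
  rcases hcase with hm1 | hpm
  · -- m = d - 2
    have hd3 : 3 ≤ d := by omega
    have ha' : a = 1 := by
      have h : (d - 1) * a = (d - 1) * 1 := by rw [haa]; omega
      exact Nat.eq_of_mul_eq_mul_left (by omega) h
    have hrest : ∀ j ∈ S.erase j0, mF d m n j = 0 := by
      intro j hj
      rw [mF]
      by_cases hcond : (∑ k : Fin n, (d ^ (n - k.val) - 1) * j k) = m + 1
      · exfalso
        have hne : j ≠ j0 := (Finset.mem_erase.1 hj).1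
        obtain ⟨k0, hk0, hjk0⟩ := cond_extract d m n a hd haa last hlast j hcond
          (by rw [hj0def] at hne; exact hne)
        obtain ⟨hW, _⟩ := cond_bounds d m n a hd haa j hcond k0 hk0 hjk0
        have h1 : (n - k0.val) * j k0 ≤ ∑ k : Fin n, (n - k.val) * j k :=
          Finset.single_le_sum (f := fun k : Fin n => (n - k.val) * j k)
            (fun i _ => Nat.zero_le _) (Finset.mem_univ k0)
        have h2 : 2 ≤ (n - k0.val) * j k0 :=
          le_trans (by omega) (Nat.mul_le_mul (le_refl (n - k0.val)) hjk0)
        omega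
      · rw [if_neg hcond]
    have hT0 : mT d m n j0 = (m : ℚ) / (d : ℚ) := by
      rw [mT]
      have hs : ∏ k : Fin n, genBinom (mX d m n j0 k) (j0 k)
          = genBinom (mX d m n j0 last) (j0 last) := by
        refine Finset.prod_eq_single _ (fun b _ hb => ?_) (fun h => absurd (Finset.mem_univ _) h)
        simp [hj0def, hb, genBinom]
      rw [hs]
      have hx : mX d m n j0 last = (m : ℚ) / (d : ℚ) := by
        rw [mX, hl1, pow_one]
        have hz : ∑ l ∈ Finset.univ.filter (fun l : Fin n => l < last),
            (d : ℚ) ^ (last.val - l.val) * ((j0 l : ℕ) : ℚ) = 0 := by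
          refine Finset.sum_eq_zero (fun l hl' => ?_)
          have hne : l ≠ last := ne_of_lt (Finset.mem_filter.1 hl').2
          simp [hj0def, hne]
        rw [hz, sub_zero]
      rw [hx]
      simp only [hj0def, if_pos rfl, ha', genBinom]
      simp
    have hinner : ∑ j ∈ S, mF d m n j = (m : ℚ) / (d : ℚ) := by
      rw [hdecomp, Finset.sum_eq_zero hrest, add_zero, mF, if_pos hcondj0, hT0]
    have hB : multibrotB d m n = -(1 / (d : ℚ)) := by
      rw [hsum0, hinner]
      field_simp
    constructor
    · rw [hB]; exact neg_ne_zero.2 (div_ne_zero one_ne_zero hdq)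
    · rw [hB, padicValRat.neg, one_div, padicValRat.inv, padicValRat.of_nat, ← ht, ha']
      simp [Nat.factorial_one]
  · -- p ∤ m
    have hWj0 : (∑ k : Fin n, (n - k.val) * j0 k) = a := by
      have hs : ∑ k : Fin n, (n - k.val) * j0 k = (n - last.val) * j0 last := by
        refine Finset.sum_eq_single _ (fun b _ hb => ?_) (fun h => absurd (Finset.mem_univ _) h)
        simp [hj0def, hb]
      rw [hs, hl1]
      simp [hj0def]
    have hFj0 : (∑ k : Fin n, padicValNat p (Nat.factorial (j0 k)))
        = padicValNat p (Nat.factorial a) := by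
      have hs : ∑ k : Fin n, padicValNat p (Nat.factorial (j0 k))
          = padicValNat p (Nat.factorial (j0 last)) := by
        refine Finset.sum_eq_single _ (fun b _ hb => ?_) (fun h => absurd (Finset.mem_univ _) h)
        simp [hj0def, hb, Nat.factorial_zero]
      rw [hs]
      simp [hj0def]
    obtain ⟨hT0ne, hT0val⟩ := mT_val d m n t hd hpd hpm ht j0
    rw [hWj0, hFj0] at hT0val
    have hrest : ∀ j ∈ S.erase j0, mF d m n j = 0 ∨
        (-((t : ℤ) * (a : ℤ)) - (padicValNat p (Nat.factorial a) : ℤ))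
          < padicValRat p (mF d m n j) := by
      intro j hj
      by_cases hcond : (∑ k : Fin n, (d ^ (n - k.val) - 1) * j k) = m + 1
      · right
        rw [mF, if_pos hcond]
        obtain ⟨hTne, hTval⟩ := mT_val d m n t hd hpd hpm ht j
        rw [hTval]
        have hne : j ≠ j0 := (Finset.mem_erase.1 hj).1
        obtain ⟨k0, hk0, hjk0⟩ := cond_extract d m n a hd haa last hlast j hcond
          (by rw [hj0def] at hne; exact hne)
        obtain ⟨hWb, hSb⟩ := cond_bounds d m n a hd haa j hcond k0 hk0 hjk0
        have hFb := padic_fact_sum_le (p := p) Finset.univ j a hSb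
        have h1 : t * (∑ k : Fin n, (n - k.val) * j k) + t ≤ t * a := by
          calc t * (∑ k : Fin n, (n - k.val) * j k) + t
              = t * ((∑ k : Fin n, (n - k.val) * j k) + 1) := by ring
            _ ≤ t * a := Nat.mul_le_mul_left t hWb
        have h1' : (t : ℤ) * ((∑ k : Fin n, (n - k.val) * j k : ℕ) : ℤ) + (t : ℤ)
            ≤ (t : ℤ) * (a : ℤ) := by exact_mod_cast h1
        have hF' : ((∑ k : Fin n, padicValNat p (Nat.factorial (j k)) : ℕ) : ℤ)
            ≤ (padicValNat p (Nat.factorial a) : ℤ) := by exact_mod_cast hFb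
        have ht1' : (1 : ℤ) ≤ (t : ℤ) := by exact_mod_cast ht1
        linarith
      · left; rw [mF, if_neg hcond]
    have hsum1 : (∑ j ∈ S.erase j0, mF d m n j) = 0 ∨
        (-((t : ℤ) * (a : ℤ)) - (padicValNat p (Nat.factorial a) : ℤ))
          < padicValRat p (∑ j ∈ S.erase j0, mF d m n j) :=
      padic_sum_lt _ _ _ hrest
    have hkey : (mT d m n j0 + ∑ j ∈ S.erase j0, mF d m n j) ≠ 0 ∧
        padicValRat p (mT d m n j0 + ∑ j ∈ S.erase j0, mF d m n j)
          = -((t : ℤ) * (a : ℤ)) - (padicValNat p (Nat.factorial a) : ℤ) :=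
      padic_add_eq hT0ne hT0val hsum1
    have hinner : ∑ j ∈ S, mF d m n j = mT d m n j0 + ∑ j ∈ S.erase j0, mF d m n j := by
      rw [hdecomp, mF, if_pos hcondj0]
    have hcne : -(1 / (m : ℚ)) ≠ 0 := neg_ne_zero.2 (div_ne_zero one_ne_zero hmq)
    have hcval : padicValRat p (-(1 / (m : ℚ))) = 0 := by
      rw [padicValRat.neg, one_div, padicValRat.inv, padicValRat.of_nat,
        padicValNat.eq_zero_of_not_dvd hpm]
      simp
    constructor
    · rw [hsum0, hinner]
      exact mul_ne_zero hcne hkey.1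
    · rw [hsum0, hinner, padicValRat.mul hcne (hinner ▸ hinner ▸ hkey.1), hcval, hkey.2]
      ring
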